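/- If x_k minimizes ‖R(A)b − x‖_{S} over x in the Krylov space K_k(A,b), where S = D(A)*D(A), then ‖R(A)b − x_k‖_2 / ‖b‖_2 ≤ κ(S)^{1/2} · min over polynomials p of degree ≤ k−1 of ‖R(A) − p(A)‖_2, where κ(S) = ‖S‖_2 ‖S^{-1}‖_2. -/

import Mathlib

set_option maxHeartbeats 1000000


/-- The Krylov space `K_k(A,b) = span{b, Ab, ..., A^{k-1}b}`. -/
noncomputable def Krylov (n : ℕ) (A : Matrix (Fin n) (Fin n) ℂ) (b : EuclideanSpace ℂ (Fin n))
    (k : ℕ) : Submodule ℂ (EuclideanSpace ℂ (Fin n)) :=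
  Submodule.span ℂ {x | ∃ i < k, x = (A ^ i).mulVec b}

/-- The `S`-norm `‖v‖_S = ⟨v, S v⟩^{1/2}` for a matrix `S`. -/
noncomputable def Snorm (n : ℕ) (S : Matrix (Fin n) (Fin n) ℂ)
    (v : EuclideanSpace ℂ (Fin n)) : ℝ :=
  Real.sqrt (@inner ℂ (EuclideanSpace ℂ (Fin n)) _ v (WithLp.toLp 2 (S.mulVec v))).re

/-- The operator 2-norm of a matrix. -/
noncomputable def opNorm {m : ℕ} (M : Matrix (Fin m) (Fin m) ℂ) : ℝ :=
  ‖Matrix.toEuclideanCLM (𝕜 := ℂ) M‖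

open Polynomial Matrix in
lemma mulVec_eq_clm (n : ℕ) (M : Matrix (Fin n) (Fin n) ℂ) (v : EuclideanSpace ℂ (Fin n)) :
    (WithLp.equiv 2 (Fin n → ℂ)).symm (M.mulVec v) = toEuclideanCLM (𝕜 := ℂ) M v :=
  rfl

open Polynomial Matrix in
lemma Snorm_eq_norm (n : ℕ) (M : Matrix (Fin n) (Fin n) ℂ) (v : EuclideanSpace ℂ (Fin n)) :
    Snorm n (Mᴴ * M) v = ‖toEuclideanCLM (𝕜 := ℂ) M v‖ := by
  have h : WithLp.toLp 2 ((Mᴴ * M).mulVec v)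
      = toEuclideanCLM (𝕜 := ℂ) (Mᴴ * M) v := mulVec_eq_clm n _ v
  have h2 : toEuclideanCLM (𝕜 := ℂ) (Mᴴ * M) v
      = (ContinuousLinearMap.adjoint (toEuclideanCLM (𝕜 := ℂ) M))
          (toEuclideanCLM (𝕜 := ℂ) M v) := by
    rw [← Matrix.star_eq_conjTranspose, _root_.map_mul, map_star,
      ContinuousLinearMap.star_eq_adjoint]
    rfl
  unfold Snorm
  rw [h, h2, ContinuousLinearMap.adjoint_inner_right,
    @inner_self_eq_norm_sq_to_K ℂ]
  simp [Real.sqrt_sq (norm_nonneg _), ← Complex.ofReal_pow]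

open Polynomial Matrix in
lemma sum_mulVec' {n : ℕ} {ι : Type*} (s : Finset ι) (f : ι → Matrix (Fin n) (Fin n) ℂ)
    (b : Fin n → ℂ) : (∑ i ∈ s, f i).mulVec b = ∑ i ∈ s, (f i).mulVec b := by
  ext j
  simp only [Matrix.mulVec, dotProduct, Matrix.sum_apply, Finset.sum_apply,
    Finset.sum_mul]
  rw [Finset.sum_comm]

open Polynomial Matrix in
lemma equiv_symm_sum {n : ℕ} {ι : Type*} (s : Finset ι) (f : ι → (Fin n → ℂ)) :
    ((WithLp.equiv 2 (Fin n → ℂ)).symm (∑ i ∈ s, f i) : EuclideanSpace ℂ (Fin n))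
      = ∑ i ∈ s, ((WithLp.equiv 2 (Fin n → ℂ)).symm (f i) : EuclideanSpace ℂ (Fin n)) := by
  induction s using Finset.cons_induction with
  | empty => simp [WithLp.equiv_symm_apply]
  | cons a s ha ih => rw [Finset.sum_cons, Finset.sum_cons, ← ih]; rfl

open Polynomial Matrix in
lemma aeval_mem_Krylov (n k : ℕ) (A : Matrix (Fin n) (Fin n) ℂ)
    (b : EuclideanSpace ℂ (Fin n)) (p : Polynomial ℂ) (hp : p.degree < (k : WithBot ℕ)) :
    ((WithLp.equiv 2 (Fin n → ℂ)).symm ((aeval A p).mulVec b) : EuclideanSpace ℂ (Fin n))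
      ∈ Krylov n A b k := by
  by_cases h0 : p = 0
  · have : ((WithLp.equiv 2 (Fin n → ℂ)).symm ((aeval A p).mulVec b)
        : EuclideanSpace ℂ (Fin n)) = 0 := by
      simp [h0, Matrix.zero_mulVec]
    rw [this]; exact Submodule.zero_mem _
  · have hnd : p.natDegree < k := (Polynomial.natDegree_lt_iff_degree_lt h0).2 hp
    rw [Polynomial.aeval_eq_sum_range' hnd, sum_mulVec']
    have : ((WithLp.equiv 2 (Fin n → ℂ)).symm
        (∑ i ∈ Finset.range k, (p.coeff i • A ^ i).mulVec b) : EuclideanSpace ℂ (Fin n))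
        = ∑ i ∈ Finset.range k, p.coeff i • ((WithLp.equiv 2 (Fin n → ℂ)).symm
          ((A ^ i).mulVec b) : EuclideanSpace ℂ (Fin n)) := by
      rw [equiv_symm_sum]
      refine Finset.sum_congr rfl fun i _ => ?_
      rw [Matrix.smul_mulVec]; rfl
    rw [this]
    refine Submodule.sum_mem _ fun i hi => Submodule.smul_mem _ _ ?_
    exact Submodule.subset_span ⟨i, Finset.mem_range.1 hi, rfl⟩

open Polynomial Matrix in
/-- If `x_k` minimizes `‖R(A)b − x‖_S` over the Krylov space, `S = D(A)ᴴD(A)`, then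
`‖R(A)b − x_k‖₂/‖b‖₂ ≤ κ(S)^{1/2} · min_{deg p ≤ k-1} ‖R(A) − p(A)‖₂`. -/
theorem stmt6 (n k : ℕ) (A : Matrix (Fin n) (Fin n) ℂ) (D N : Polynomial ℂ)
    (hD : IsUnit (aeval A D)) (b : EuclideanSpace ℂ (Fin n)) (hb : b ≠ 0)
    (xk : EuclideanSpace ℂ (Fin n)) (hmem : xk ∈ Krylov n A b k)
    (hmin : ∀ x ∈ Krylov n A b k,
      Snorm n ((aeval A D)ᴴ * aeval A D) ((WithLp.equiv 2 (Fin n → ℂ)).symm (((aeval A D)⁻¹ * aeval A N).mulVec b) - xk)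
      ≤ Snorm n ((aeval A D)ᴴ * aeval A D) ((WithLp.equiv 2 (Fin n → ℂ)).symm (((aeval A D)⁻¹ * aeval A N).mulVec b) - x)) :
    ∀ p : Polynomial ℂ, p.degree < (k : WithBot ℕ) →
      ‖((WithLp.equiv 2 (Fin n → ℂ)).symm (((aeval A D)⁻¹ * aeval A N).mulVec b) - xk : EuclideanSpace ℂ (Fin n))‖ / ‖b‖
      ≤ Real.sqrt (opNorm ((aeval A D)ᴴ * aeval A D) * opNorm (((aeval A D)ᴴ * aeval A D)⁻¹))
        * opNorm ((aeval A D)⁻¹ * aeval A N - aeval A p) := by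
  intro p hp
  set M : Matrix (Fin n) (Fin n) ℂ := aeval A D with hM
  set R : Matrix (Fin n) (Fin n) ℂ := M⁻¹ * aeval A N with hR
  set E : Matrix (Fin n) (Fin n) ℂ := R - aeval A p with hE
  set T := toEuclideanCLM (𝕜 := ℂ) M with hT
  set T' := toEuclideanCLM (𝕜 := ℂ) M⁻¹ with hT'
  set TE := toEuclideanCLM (𝕜 := ℂ) E with hTE
  set r : EuclideanSpace ℂ (Fin n) := (WithLp.equiv 2 (Fin n → ℂ)).symm (R.mulVec b) with hr
  set e : EuclideanSpace ℂ (Fin n) := r - xk with he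
  have hdet : IsUnit M.det := (Matrix.isUnit_iff_isUnit_det M).1 hD
  have hMinv : M⁻¹ * M = 1 := Matrix.nonsing_inv_mul M hdet
  have hTT : T' * T = 1 := by rw [hT, hT', ← _root_.map_mul, hMinv, _root_.map_one]
  have hid : ∀ v : EuclideanSpace ℂ (Fin n), T' (T v) = v := by
    intro v
    have : T' (T v) = (T' * T) v := rfl
    rw [this, hTT, ContinuousLinearMap.one_apply]
  have hnormv : ∀ v : EuclideanSpace ℂ (Fin n), ‖v‖ ≤ ‖T'‖ * ‖T v‖ := by
    intro v
    conv_lhs => rw [← hid v]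
    exact T'.le_opNorm _
  -- the minimization step
  have hmem' := aeval_mem_Krylov n k A b p hp
  have h1 : Snorm n (Mᴴ * M) e ≤ Snorm n (Mᴴ * M)
      (r - (WithLp.equiv 2 (Fin n → ℂ)).symm ((aeval A p).mulVec b)) := hmin _ hmem'
  have h2 : (r - ((WithLp.equiv 2 (Fin n → ℂ)).symm ((aeval A p).mulVec b))
      : EuclideanSpace ℂ (Fin n))
      = (WithLp.equiv 2 (Fin n → ℂ)).symm (E.mulVec b) := by
    rw [hE, Matrix.sub_mulVec, hr]; rfl
  have h3 : ‖T e‖ ≤ ‖T‖ * (‖TE‖ * ‖b‖) := by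
    have := h1
    rw [Snorm_eq_norm, Snorm_eq_norm, h2, mulVec_eq_clm] at this
    refine this.trans ?_
    calc ‖T (TE b)‖ ≤ ‖T‖ * ‖TE b‖ := T.le_opNorm _
      _ ≤ ‖T‖ * (‖TE‖ * ‖b‖) := by
          exact mul_le_mul_of_nonneg_left (TE.le_opNorm b) (norm_nonneg T)
  have hbpos : (0:ℝ) < ‖b‖ := norm_pos_iff.2 hb
  have hmain : ‖e‖ ≤ ‖T'‖ * ‖T‖ * ‖TE‖ * ‖b‖ := by
    calc ‖e‖ ≤ ‖T'‖ * ‖T e‖ := hnormv e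
      _ ≤ ‖T'‖ * (‖T‖ * (‖TE‖ * ‖b‖)) :=
          mul_le_mul_of_nonneg_left h3 (norm_nonneg T')
      _ = ‖T'‖ * ‖T‖ * ‖TE‖ * ‖b‖ := by ring
  have hRHS : Real.sqrt (opNorm (Mᴴ * M) * opNorm ((Mᴴ * M)⁻¹)) * opNorm E
      = ‖T'‖ * ‖T‖ * ‖TE‖ := by
    have e1 : opNorm (Mᴴ * M) = ‖T‖ * ‖T‖ := by
      rw [opNorm, ← Matrix.star_eq_conjTranspose, _root_.map_mul, map_star,
        ContinuousLinearMap.star_eq_adjoint, ← hT]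
      exact ContinuousLinearMap.norm_adjoint_comp_self _
    have e2 : opNorm ((Mᴴ * M)⁻¹) = ‖T'‖ * ‖T'‖ := by
      have hinv : (Mᴴ * M)⁻¹ = M⁻¹ * star (M⁻¹) := by
        rw [Matrix.mul_inv_rev, Matrix.star_eq_conjTranspose,
          Matrix.conjTranspose_nonsing_inv]
      rw [opNorm, hinv, _root_.map_mul, map_star,
        ContinuousLinearMap.star_eq_adjoint, ← hT']
      rw [show T' * ContinuousLinearMap.adjoint T'
          = ContinuousLinearMap.adjoint (ContinuousLinearMap.adjoint T')
            * ContinuousLinearMap.adjoint T' by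
        rw [ContinuousLinearMap.adjoint_adjoint]]
      refine (ContinuousLinearMap.norm_adjoint_comp_self
        (ContinuousLinearMap.adjoint T')).trans ?_
      rw [ContinuousLinearMap.adjoint.norm_map]
    rw [e1, e2]
    have : ‖T‖ * ‖T‖ * (‖T'‖ * ‖T'‖) = (‖T‖ * ‖T'‖) * (‖T‖ * ‖T'‖) := by ring
    rw [this, Real.sqrt_mul_self (by positivity)]
    show ‖T‖ * ‖T'‖ * ‖TE‖ = _
    ring
  rw [div_le_iff₀ hbpos, hRHS]
  exact hmain
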